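/- For R, R_d ∈ SO(3), the matrix E(R,R_d) = (1/2)(tr(RᵀR_d)·I - RᵀR_d) has operator norm at most 1. -/

import Mathlib

open Matrix

/-- Determinant of `A + x • 1` for a 3×3 matrix. -/
private lemma det_add_smul_one3 (A : Matrix (Fin 3) (Fin 3) ℝ) (x : ℝ) :
    (A + x • 1).det = A.det + (adjugate A).trace * x + A.trace * x ^ 2 + x ^ 3 := by
  simp [Matrix.det_fin_three, Matrix.adjugate_fin_three, Matrix.trace_fin_three,
    Matrix.one_apply, Matrix.add_apply, Matrix.smul_apply]
  ring

/-- Cayley–Hamilton style identity for 3×3 matrices. -/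
private lemma ch3 (A : Matrix (Fin 3) (Fin 3) ℝ) :
    A * A - A.trace • A + (adjugate A).trace • 1 = adjugate A := by
  ext i j
  fin_cases i <;> fin_cases j <;>
    simp [Matrix.mul_apply, Matrix.adjugate_fin_three, Matrix.trace_fin_three,
      Matrix.one_apply, Fin.sum_univ_three] <;> ring

private lemma dps_nonneg (v : Fin 3 → ℝ) : 0 ≤ v ⬝ᵥ v :=
  Finset.sum_nonneg fun _ _ => mul_self_nonneg _

private lemma dot_mulVec_self (A : Matrix (Fin 3) (Fin 3) ℝ) (v : Fin 3 → ℝ) :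
    (A.mulVec v) ⬝ᵥ (A.mulVec v) = v ⬝ᵥ ((Aᵀ * A).mulVec v) := by
  symm
  rw [dotProduct_comm, ← Matrix.mulVec_mulVec, Matrix.mulVec_transpose,
    ← Matrix.dotProduct_mulVec]

private lemma norm_sq_CLM (A : Matrix (Fin 3) (Fin 3) ℝ) (x : EuclideanSpace ℝ (Fin 3)) :
    ‖Matrix.toEuclideanCLM (𝕜 := ℝ) A x‖ ^ 2
      = (A.mulVec (WithLp.equiv 2 _ x)) ⬝ᵥ (A.mulVec (WithLp.equiv 2 _ x)) := by
  rw [EuclideanSpace.norm_eq, Real.sq_sqrt (by positivity), dotProduct]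
  congr 1
  ext i
  have h := congrFun (Matrix.ofLp_toEuclideanCLM (𝕜 := ℝ) A x) i
  simp only [Matrix.toLin'_apply] at h
  have h2 : (toEuclideanCLM (𝕜 := ℝ) A x) i = (A *ᵥ (WithLp.equiv 2 (Fin 3 → ℝ)) x) i := h
  rw [h2]; simp [sq]

private lemma norm_sq_E (x : EuclideanSpace ℝ (Fin 3)) :
    ‖x‖ ^ 2 = (WithLp.equiv 2 _ x) ⬝ᵥ (WithLp.equiv 2 _ x) := by
  rw [EuclideanSpace.norm_eq, Real.sq_sqrt (by positivity), dotProduct]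
  simp [sq]

set_option maxHeartbeats 1000000 in
theorem stmt7 (R Rd : Matrix (Fin 3) (Fin 3) ℝ)
    (hR : Rᵀ * R = 1) (hRdet : R.det = 1)
    (hRd : Rdᵀ * Rd = 1) (hRddet : Rd.det = 1) :
    ‖Matrix.toEuclideanCLM (𝕜 := ℝ)
      ((1 / 2 : ℝ) • (Matrix.trace (Rᵀ * Rd) • (1 : Matrix (Fin 3) (Fin 3) ℝ) - Rᵀ * Rd))‖ ≤ 1 := by
  set Q : Matrix (Fin 3) (Fin 3) ℝ := Rᵀ * Rd with hQdef
  set t : ℝ := Q.trace with htdef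
  -- basic facts about Q
  have hRR : R * Rᵀ = 1 := mul_eq_one_comm.mp hR
  have hQo : Qᵀ * Q = 1 := by
    have : Qᵀ * Q = Rdᵀ * (R * Rᵀ) * Rd := by
      simp [hQdef, Matrix.transpose_mul, Matrix.transpose_transpose, mul_assoc]
    rw [this, hRR, mul_one, hRd]
  have hQo' : Q * Qᵀ = 1 := mul_eq_one_comm.mp hQo
  have hQdet : Q.det = 1 := by
    rw [hQdef, Matrix.det_mul, Matrix.det_transpose, hRdet, hRddet, one_mul]
  have hAdj : adjugate Q = Qᵀ := by
    have h1 : Q * adjugate Q = 1 := by rw [Matrix.mul_adjugate, hQdet, one_smul]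
    calc adjugate Q = (Qᵀ * Q) * adjugate Q := by rw [hQo, one_mul]
      _ = Qᵀ * (Q * adjugate Q) := by rw [mul_assoc]
      _ = Qᵀ := by rw [h1, mul_one]
  have htr : (adjugate Q).trace = t := by rw [hAdj, Matrix.trace_transpose]
  have hCH : Qᵀ = Q * Q - t • Q + t • 1 := by
    rw [← hAdj, ← ch3 Q, htr]
  have hCH' : Q = Qᵀ * Qᵀ - t • Qᵀ + t • 1 := by
    have h := congrArg Matrix.transpose hCH
    simpa [Matrix.transpose_mul, Matrix.transpose_smul, Matrix.transpose_one,
      Matrix.transpose_add, Matrix.transpose_sub] using h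
  have e1 : Q * Q = Qᵀ + t • Q - t • 1 := by rw [hCH]; abel
  have e2 : Qᵀ * Qᵀ = Q + t • Qᵀ - t • 1 := by
    calc Qᵀ * Qᵀ = (Qᵀ * Qᵀ - t • Qᵀ + t • 1) + t • Qᵀ - t • 1 := by abel
      _ = Q + t • Qᵀ - t • 1 := by rw [← hCH']
  -- trace bounds from orthogonality (columns are unit vectors)
  have hcol : ∀ i : Fin 3, Q 0 i ^ 2 + Q 1 i ^ 2 + Q 2 i ^ 2 = 1 := by
    intro i
    have h := congrFun (congrFun hQo i) i
    simpa [Matrix.mul_apply, Fin.sum_univ_three, Matrix.one_apply, sq,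
      Matrix.transpose_apply] using h
  have ht3 : t ≤ 3 := by
    have h0 := hcol 0; have h1 := hcol 1; have h2 := hcol 2
    have htr3 : t = Q 0 0 + Q 1 1 + Q 2 2 := by
      rw [htdef, Matrix.trace_fin_three]
    nlinarith [sq_nonneg (Q 0 0 - 1), sq_nonneg (Q 1 1 - 1), sq_nonneg (Q 2 2 - 1),
      sq_nonneg (Q 1 0), sq_nonneg (Q 0 1), sq_nonneg (Q 2 1)]
  -- t ≥ -1 via a real eigenvalue argument
  have ht1 : -1 ≤ t := by
    by_contra hlt
    push_neg at hlt
    set D : ℝ := Real.sqrt ((t - 1) ^ 2 - 4) with hDdef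
    have hD2 : D ^ 2 = (t - 1) ^ 2 - 4 := Real.sq_sqrt (by nlinarith)
    set r : ℝ := ((t - 1) + D) / 2 with hrdef
    have hquad : r ^ 2 + (1 - t) * r + 1 = 0 := by
      rw [hrdef]; nlinarith [hD2]
    have hdet0 : (Q + (-r) • 1).det = 0 := by
      rw [det_add_smul_one3, hQdet, htr, htdef]
      linear_combination (1 - r) * hquad
    obtain ⟨v, hv0, hveq⟩ := (Matrix.exists_mulVec_eq_zero_iff).mpr hdet0
    have hQv : Q.mulVec v = r • v := by
      rw [Matrix.add_mulVec, Matrix.smul_mulVec, Matrix.one_mulVec, neg_smul,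
        add_neg_eq_zero] at hveq
      exact hveq
    have hn : (0 : ℝ) < v ⬝ᵥ v := by
      rcases lt_or_eq_of_le (dps_nonneg v) with h | h
      · exact h
      · exact absurd ((dotProduct_self_eq_zero).mp h.symm) hv0
    have hpres : (Q.mulVec v) ⬝ᵥ (Q.mulVec v) = v ⬝ᵥ v := by
      rw [dot_mulVec_self, hQo, Matrix.one_mulVec]
    rw [hQv] at hpres
    have hr2 : r ^ 2 = 1 := by
      have h : r ^ 2 * (v ⬝ᵥ v) = v ⬝ᵥ v := by
        simpa [smul_dotProduct, dotProduct_smul, sq, mul_assoc] using hpres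
      have := mul_right_cancel₀ (ne_of_gt hn) (by linarith [h] : r ^ 2 * (v ⬝ᵥ v) = 1 * (v ⬝ᵥ v))
      exact this
    have h4 : (1 - t) ^ 2 = 4 := by nlinarith [hquad, hr2]
    nlinarith [h4, hlt]
  -- the PSD matrix M
  set M : Matrix (Fin 3) (Fin 3) ℝ := Q + Qᵀ + (1 - t) • 1 with hMdef
  have hMsym : Mᵀ = M := by
    rw [hMdef]
    simp [Matrix.transpose_add, Matrix.transpose_smul, Matrix.transpose_one]
    abel
  have hMM : M * M = (3 - t) • M := by
    rw [hMdef]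
    simp only [add_mul, mul_add, smul_mul_assoc, mul_smul_comm, one_mul, mul_one,
      hQo, hQo', e1, e2]
    module
  have hPSD : ∀ v : Fin 3 → ℝ, 0 ≤ v ⬝ᵥ (M.mulVec v) := by
    intro v
    have key : (3 - t) * (v ⬝ᵥ (M.mulVec v)) = (M.mulVec v) ⬝ᵥ (M.mulVec v) := by
      rw [dot_mulVec_self, hMsym, hMM, Matrix.smul_mulVec, dotProduct_smul,
        smul_eq_mul]
    rcases eq_or_lt_of_le ht3 with h | h
    · -- t = 3 : Mv = 0
      have h0 : (M.mulVec v) ⬝ᵥ (M.mulVec v) = 0 := by rw [← key, ← h]; ring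
      have hz : M.mulVec v = 0 := (dotProduct_self_eq_zero).mp h0
      rw [hz]; simp
    · nlinarith [dps_nonneg (M.mulVec v), key]
  -- final norm bound
  apply ContinuousLinearMap.opNorm_le_bound _ (by norm_num)
  intro x
  rw [one_mul]
  set A : Matrix (Fin 3) (Fin 3) ℝ := (1 / 2 : ℝ) • (t • 1 - Q) with hAdef
  set v : Fin 3 → ℝ := WithLp.equiv 2 _ x with hvdef
  have hAtA : Aᵀ * A = ((t ^ 2 + 1) / 4) • (1 : Matrix (Fin 3) (Fin 3) ℝ)
      - (t / 4) • (Q + Qᵀ) := by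
    have hAT : Aᵀ = (1 / 2 : ℝ) • (t • (1 : Matrix (Fin 3) (Fin 3) ℝ) - Qᵀ) := by
      rw [hAdef]
      simp [Matrix.transpose_smul, Matrix.transpose_sub, Matrix.transpose_one]
    rw [hAT, hAdef]
    simp only [smul_mul_assoc, mul_smul_comm, sub_mul, mul_sub, one_mul, mul_one,
      smul_sub, smul_smul, hQo]
    module
  have hTx : ‖Matrix.toEuclideanCLM (𝕜 := ℝ) A x‖ ^ 2 = v ⬝ᵥ ((Aᵀ * A).mulVec v) := by
    rw [norm_sq_CLM, dot_mulVec_self]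
  have hxn : ‖x‖ ^ 2 = v ⬝ᵥ v := norm_sq_E x
  set n : ℝ := v ⬝ᵥ v with hndef
  set s : ℝ := v ⬝ᵥ ((Q + Qᵀ).mulVec v) with hsdef
  have hnn : 0 ≤ n := dps_nonneg v
  have hTx2 : ‖Matrix.toEuclideanCLM (𝕜 := ℝ) A x‖ ^ 2 = ((t ^ 2 + 1) / 4) * n - (t / 4) * s := by
    rw [hTx, hAtA]
    simp only [Matrix.sub_mulVec, Matrix.smul_mulVec, Matrix.one_mulVec,
      dotProduct_sub, dotProduct_smul, smul_eq_mul]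
    rfl
  -- s ≥ (t-1) n from PSD of M
  have hslb : (t - 1) * n ≤ s := by
    have h := hPSD v
    have hexp : v ⬝ᵥ (M.mulVec v) = s + (1 - t) * n := by
      rw [hMdef]
      simp [Matrix.add_mulVec, Matrix.smul_mulVec, Matrix.one_mulVec,
        dotProduct_add, dotProduct_smul, hndef, hsdef, smul_eq_mul]
    rw [hexp] at h
    linarith
  -- s ≤ 2 n  and  s ≥ -2 n  (Cauchy–Schwarz via norm preservation)
  have hw : (Q.mulVec v) ⬝ᵥ (Q.mulVec v) = n := by
    rw [dot_mulVec_self, hQo, Matrix.one_mulVec, hndef]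
  have hsplit : s = 2 * (v ⬝ᵥ (Q.mulVec v)) := by
    rw [hsdef, Matrix.add_mulVec, dotProduct_add]
    have : v ⬝ᵥ (Qᵀ.mulVec v) = v ⬝ᵥ (Q.mulVec v) := by
      rw [Matrix.mulVec_transpose]
      exact (dotProduct_comm _ _).trans (Matrix.dotProduct_mulVec v Q v).symm
    rw [this]; ring
  have hsub : s ≤ 2 * n := by
    have h := dps_nonneg (v - Q.mulVec v)
    have hex : (v - Q.mulVec v) ⬝ᵥ (v - Q.mulVec v)
        = n - 2 * (v ⬝ᵥ (Q.mulVec v)) + n := by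
      rw [sub_dotProduct, dotProduct_sub, dotProduct_sub, hw]
      rw [dotProduct_comm (Q.mulVec v) v]
      rw [hndef]; ring
    rw [hex] at h
    rw [hsplit]; linarith
  have hslb2 : -(2 * n) ≤ s := by
    have h := dps_nonneg (v + Q.mulVec v)
    have hex : (v + Q.mulVec v) ⬝ᵥ (v + Q.mulVec v)
        = n + 2 * (v ⬝ᵥ (Q.mulVec v)) + n := by
      rw [add_dotProduct, dotProduct_add, dotProduct_add, hw]
      rw [dotProduct_comm (Q.mulVec v) v]
      rw [hndef]; ring
    rw [hex] at h
    rw [hsplit]; linarith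
  -- conclude
  have hineq : ‖Matrix.toEuclideanCLM (𝕜 := ℝ) A x‖ ^ 2 ≤ ‖x‖ ^ 2 := by
    rw [hTx2, hxn]
    nlinarith [mul_nonneg (by linarith : (0:ℝ) ≤ t + 1) (by linarith : (0:ℝ) ≤ s - (t - 1) * n),
      mul_nonneg (by linarith : (0:ℝ) ≤ 3 - t) (by linarith : (0:ℝ) ≤ 2 * n - s),
      mul_nonneg (mul_nonneg (by linarith : (0:ℝ) ≤ 3 - t) (by linarith : (0:ℝ) ≤ t + 1)) hnn]
  have h1 := norm_nonneg (Matrix.toEuclideanCLM (𝕜 := ℝ) A x)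
  have h2 := norm_nonneg x
  nlinarith [hineq, h1, h2]
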